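/- arXiv:1311.7343 — 5 statements merged into one kernel-verified Lean document; each statement's English description precedes it below -/
import Mathlib

section
/- Let g : ℝⁿ → ℂ^{r×r} be a twice differentiable map such that g(x) is Hermitian positive definite for all x, and define Θ_{jk} := ∂/∂x_k (g⁻¹ ∂g/∂x_j). Then for all vectors u, v ∈ ℂ^r and all indices j, k, one has (Θ_{jk} u, v)_g = (u, Θ_{kj} v)_g, where (a,b)_g := b* g a. -/
open scoped ComplexOrder
open Matrix MeasureTheory

section Preamble

variable {ι : Type*} [Fintype ι] [DecidableEq ι] {r : ℕ}

/-- Partial derivative of a complex-valued function on `ι → ℝ` in direction `j`. -/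
noncomputable def pdC (j : ι) (f : (ι → ℝ) → ℂ) (x : ι → ℝ) : ℂ :=
  fderiv ℝ f x (Pi.single j 1)

/-- Partial derivative of a real-valued function on `ι → ℝ` in direction `j`. -/
noncomputable def pdR (j : ι) (f : (ι → ℝ) → ℝ) (x : ι → ℝ) : ℝ :=
  fderiv ℝ f x (Pi.single j 1)

/-- Entrywise partial derivative of a matrix-valued function. -/
noncomputable def mpd (j : ι) (g : (ι → ℝ) → Matrix (Fin r) (Fin r) ℂ) (x : ι → ℝ) :
    Matrix (Fin r) (Fin r) ℂ :=
  Matrix.of fun a b => pdC j (fun y => g y a b) x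

/-- The curvature-type quantity `Θ_{jk} = ∂_{x_k}(g⁻¹ ∂_{x_j} g)`. -/
noncomputable def Theta (g : (ι → ℝ) → Matrix (Fin r) (Fin r) ℂ) (j k : ι) (x : ι → ℝ) :
    Matrix (Fin r) (Fin r) ℂ :=
  mpd k (fun y => (g y)⁻¹ * mpd j g y) x

/-- The pairing `(u, v)_g = v* g u`. -/
noncomputable def ip (g : Matrix (Fin r) (Fin r) ℂ) (u v : Fin r → ℂ) : ℂ :=
  star v ⬝ᵥ g.mulVec u

/-- A metric: twice differentiable entries, Hermitian positive definite values. -/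
def IsMetric (g : (ι → ℝ) → Matrix (Fin r) (Fin r) ℂ) : Prop :=
  (∀ x, (g x).PosDef) ∧ ∀ a b, ContDiff ℝ 2 fun x => g x a b

/-- Log concavity in the sense of Nakano. -/
def NakanoLogConcave (g : (ι → ℝ) → Matrix (Fin r) (Fin r) ℂ) : Prop :=
  ∀ (x : ι → ℝ) (u : ι → Fin r → ℂ),
    ∑ j, ∑ k, ip (g x) ((Theta g j k x).mulVec (u j)) (u k) ≤ 0

/-- Log concavity in the sense of Griffiths. -/
def GriffithsLogConcave (g : (ι → ℝ) → Matrix (Fin r) (Fin r) ℂ) : Prop :=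
  ∀ (x : ι → ℝ) (u : Fin r → ℂ) (v : ι → ℂ),
    ∑ j, ∑ k, ip (g x) ((Theta g j k x).mulVec u) u * (v j * star (v k)) ≤ 0

end Preamble

section Aux

variable {n r : ℕ}

private lemma pdC_mul {j : Fin n} {f g : (Fin n → ℝ) → ℂ} {x : Fin n → ℝ}
    (hf : DifferentiableAt ℝ f x) (hg : DifferentiableAt ℝ g x) :
    pdC j (fun y => f y * g y) x = pdC j f x * g x + f x * pdC j g x := by
  simp only [pdC]
  rw [fderiv_fun_mul hf hg]
  simp only [ContinuousLinearMap.add_apply, ContinuousLinearMap.smul_apply, smul_eq_mul]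
  ring

private lemma pdC_sum {ι' : Type*} {j : Fin n} {s : Finset ι'} {f : ι' → (Fin n → ℝ) → ℂ}
    {x : Fin n → ℝ} (h : ∀ i ∈ s, DifferentiableAt ℝ (f i) x) :
    pdC j (fun y => ∑ i ∈ s, f i y) x = ∑ i ∈ s, pdC j (f i) x := by
  simp only [pdC]
  rw [fderiv_fun_sum h]
  simp

private lemma pdC_const {j : Fin n} {c : ℂ} {x : Fin n → ℝ} : pdC j (fun _ => c) x = 0 := by
  simp [pdC]

private lemma pdC_star {j : Fin n} {f : (Fin n → ℝ) → ℂ} {x : Fin n → ℝ} :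
    pdC j (fun y => star (f y)) x = star (pdC j f x) := by
  simp only [pdC, fderiv_star]
  simp

private lemma diffAt_det {M : (Fin n → ℝ) → Matrix (Fin r) (Fin r) ℂ} {x : Fin n → ℝ}
    (h : ∀ a b, DifferentiableAt ℝ (fun y => M y a b) x) :
    DifferentiableAt ℝ (fun y => (M y).det) x := by
  simp only [Matrix.det_apply']
  apply DifferentiableAt.fun_sum
  intro σ _
  apply DifferentiableAt.const_mul
  exact (HasFDerivAt.finset_prod (fun i _ => (h (σ i) i).hasFDerivAt)).differentiableAt

private lemma diffAt_inv_entry {g : (Fin n → ℝ) → Matrix (Fin r) (Fin r) ℂ} {x : Fin n → ℝ}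
    (h1 : ∀ y, (g y).PosDef) (h2 : ∀ a b, DifferentiableAt ℝ (fun y => g y a b) x)
    (a b : Fin r) : DifferentiableAt ℝ (fun y => (g y)⁻¹ a b) x := by
  have hne : (g x).det ≠ 0 := (h1 x).det_pos.ne'
  have hrw : ∀ y, (g y)⁻¹ a b = ((g y).det)⁻¹ * (g y).adjugate a b := by
    intro y
    rw [Matrix.inv_def]
    simp [Ring.inverse_eq_inv']
  simp only [hrw]
  refine DifferentiableAt.mul ((diffAt_det h2).inv hne) ?_
  simp only [Matrix.adjugate_apply]
  apply diffAt_det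
  intro c d
  rcases eq_or_ne c b with hc | hc
  · subst hc
    simp only [Matrix.updateRow_self]
    exact differentiableAt_const _
  · simp only [Matrix.updateRow_ne hc]
    exact h2 c d

private lemma diffAt_pdC {f : (Fin n → ℝ) → ℂ} (hf : ContDiff ℝ 2 f) (j : Fin n)
    (x : Fin n → ℝ) : DifferentiableAt ℝ (fun y => pdC j f y) x := by
  have h1 : ContDiff ℝ 1 (fderiv ℝ f) := hf.fderiv_right (by norm_num)
  exact (h1.differentiable one_ne_zero x).clm_apply (differentiableAt_const _)

private lemma pdC_comm {f : (Fin n → ℝ) → ℂ} (hf : ContDiff ℝ 2 f) (j k : Fin n)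
    (x : Fin n → ℝ) : pdC k (fun y => pdC j f y) x = pdC j (fun y => pdC k f y) x := by
  have hsym : IsSymmSndFDerivAt ℝ f x := hf.contDiffAt.isSymmSndFDerivAt (by simp [minSmoothness_of_isRCLikeNormedField])
  have hd : DifferentiableAt ℝ (fderiv ℝ f) x :=
    ((show ContDiff ℝ 1 (fderiv ℝ f) from hf.fderiv_right (by norm_num)).differentiable one_ne_zero) x
  have h1 : ∀ v w : Fin n → ℝ,
      fderiv ℝ (fun y => fderiv ℝ f y v) x w = fderiv ℝ (fderiv ℝ f) x w v := by
    intro v w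
    rw [fderiv_clm_apply hd (differentiableAt_const v)]
    simp
  simp only [pdC]
  rw [h1, h1, hsym]

private lemma mpd_mul {A B : (Fin n → ℝ) → Matrix (Fin r) (Fin r) ℂ} {x : Fin n → ℝ} {k : Fin n}
    (hA : ∀ a b, DifferentiableAt ℝ (fun y => A y a b) x)
    (hB : ∀ a b, DifferentiableAt ℝ (fun y => B y a b) x) :
    mpd k (fun y => A y * B y) x = mpd k A x * B x + A x * mpd k B x := by
  ext a b
  simp only [mpd, Matrix.of_apply, Matrix.add_apply, Matrix.mul_apply]
  calc pdC k (fun y => ∑ c, A y a c * B y c b) x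
      = ∑ c, pdC k (fun y => A y a c * B y c b) x :=
        pdC_sum (fun c _ => (hA a c).mul (hB c b))
    _ = ∑ c, (pdC k (fun y => A y a c) x * B x c b + A x a c * pdC k (fun y => B y c b) x) :=
        Finset.sum_congr rfl fun c _ => pdC_mul (hA a c) (hB c b)
    _ = _ := Finset.sum_add_distrib

private lemma mpd_const {C : Matrix (Fin r) (Fin r) ℂ} {x : Fin n → ℝ} {k : Fin n} :
    mpd k (fun _ => C) x = 0 := by
  ext a b
  simp [mpd, pdC_const]

private lemma mpd_inv {g : (Fin n → ℝ) → Matrix (Fin r) (Fin r) ℂ} (h1 : ∀ y, (g y).PosDef)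
    (h2 : ∀ a b, ContDiff ℝ 2 fun y => g y a b) (k : Fin n) (x : Fin n → ℝ) :
    mpd k (fun y => (g y)⁻¹) x = -((g x)⁻¹ * mpd k g x * (g x)⁻¹) := by
  have hgd : ∀ (y : Fin n → ℝ) a b, DifferentiableAt ℝ (fun z => g z a b) y := fun y a b =>
    ((h2 a b).differentiable (by norm_num)) y
  have hinv : ∀ a b, DifferentiableAt ℝ (fun y => (g y)⁻¹ a b) x :=
    diffAt_inv_entry h1 (hgd x)
  have hu : ∀ y, IsUnit (g y).det := fun y => (h1 y).det_pos.ne'.isUnit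
  have hid : (fun y => (g y)⁻¹ * g y) = fun _ => (1 : Matrix (Fin r) (Fin r) ℂ) := by
    funext y
    exact Matrix.nonsing_inv_mul _ (hu y)
  have h0 : mpd k (fun y => (g y)⁻¹) x * g x + (g x)⁻¹ * mpd k g x = 0 := by
    rw [← mpd_mul hinv (hgd x), hid, mpd_const]
  have h3 : mpd k (fun y => (g y)⁻¹) x * g x = -((g x)⁻¹ * mpd k g x) :=
    eq_neg_of_add_eq_zero_left h0
  calc mpd k (fun y => (g y)⁻¹) x
      = mpd k (fun y => (g y)⁻¹) x * (g x * (g x)⁻¹) := by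
        rw [Matrix.mul_nonsing_inv _ (hu x), mul_one]
    _ = (mpd k (fun y => (g y)⁻¹) x * g x) * (g x)⁻¹ := by rw [mul_assoc]
    _ = -((g x)⁻¹ * mpd k g x * (g x)⁻¹) := by rw [h3, neg_mul]

private lemma mpd_herm {g : (Fin n → ℝ) → Matrix (Fin r) (Fin r) ℂ}
    (h1 : ∀ y, (g y).IsHermitian) (j : Fin n) (x : Fin n → ℝ) :
    (mpd j g x)ᴴ = mpd j g x := by
  ext a b
  simp only [Matrix.conjTranspose_apply, mpd, Matrix.of_apply]
  rw [← pdC_star]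
  congr 1
  funext y
  rw [← Matrix.conjTranspose_apply, (h1 y).eq]

private lemma mpd_mpd_herm {g : (Fin n → ℝ) → Matrix (Fin r) (Fin r) ℂ}
    (h1 : ∀ y, (g y).IsHermitian) (j k : Fin n) (x : Fin n → ℝ) :
    (mpd k (mpd j g) x)ᴴ = mpd k (mpd j g) x := by
  ext a b
  simp only [Matrix.conjTranspose_apply, mpd, Matrix.of_apply]
  rw [← pdC_star]
  congr 1
  funext y
  rw [← pdC_star]
  congr 1
  funext z
  rw [← Matrix.conjTranspose_apply, (h1 z).eq]

private lemma mpd_mpd_comm {g : (Fin n → ℝ) → Matrix (Fin r) (Fin r) ℂ}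
    (h2 : ∀ a b, ContDiff ℝ 2 fun y => g y a b) (j k : Fin n) (x : Fin n → ℝ) :
    mpd k (mpd j g) x = mpd j (mpd k g) x := by
  ext a b
  simp only [mpd, Matrix.of_apply]
  exact pdC_comm (h2 a b) j k x

private lemma key_matrix {g : (Fin n → ℝ) → Matrix (Fin r) (Fin r) ℂ} (hg : IsMetric g)
    (j k : Fin n) (x : Fin n → ℝ) :
    g x * Theta g j k x = (Theta g k j x)ᴴ * g x := by
  obtain ⟨h1, h2⟩ := hg
  have hherm : ∀ y, (g y).IsHermitian := fun y => (h1 y).isHermitian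
  have hgd : ∀ (y : Fin n → ℝ) a b, DifferentiableAt ℝ (fun z => g z a b) y := fun y a b =>
    ((h2 a b).differentiable (by norm_num)) y
  have hinv : ∀ y a b, DifferentiableAt ℝ (fun z => (g z)⁻¹ a b) y := fun y =>
    diffAt_inv_entry h1 (hgd y)
  have hDd : ∀ (i : Fin n) (y : Fin n → ℝ) a b,
      DifferentiableAt ℝ (fun z => mpd i g z a b) y := by
    intro i y a b
    simpa [mpd] using diffAt_pdC (h2 a b) i y
  have hu : ∀ y, IsUnit (g y).det := fun y => (h1 y).det_pos.ne'.isUnit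
  have hTheta : ∀ j' k' : Fin n, g x * Theta g j' k' x =
      -(mpd k' g x * (g x)⁻¹ * mpd j' g x) + mpd k' (mpd j' g) x := by
    intro j' k'
    have hexp : Theta g j' k' x =
        mpd k' (fun y => (g y)⁻¹) x * mpd j' g x + (g x)⁻¹ * mpd k' (mpd j' g) x := by
      simp only [Theta]
      exact mpd_mul (hinv x) (hDd j' x)
    rw [hexp, mpd_inv h1 h2, mul_add]
    rw [show g x * (-((g x)⁻¹ * mpd k' g x * (g x)⁻¹) * mpd j' g x) =
        -((g x * (g x)⁻¹) * (mpd k' g x * (g x)⁻¹ * mpd j' g x)) by noncomm_ring]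
    rw [show g x * ((g x)⁻¹ * mpd k' (mpd j' g) x) =
        (g x * (g x)⁻¹) * mpd k' (mpd j' g) x by noncomm_ring]
    rw [Matrix.mul_nonsing_inv _ (hu x), one_mul, one_mul]
  have hjk := hTheta j k
  have hkj := hTheta k j
  have hHinv : ((g x)⁻¹)ᴴ = (g x)⁻¹ := (hherm x).inv.eq
  have hstep : (g x * Theta g k j x)ᴴ = g x * Theta g j k x := by
    rw [hkj, hjk]
    rw [conjTranspose_add, conjTranspose_neg, Matrix.conjTranspose_mul,
      Matrix.conjTranspose_mul, hHinv, mpd_herm hherm, mpd_herm hherm,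
      mpd_mpd_herm hherm, mpd_mpd_comm h2]
    noncomm_ring
  rw [← hstep, Matrix.conjTranspose_mul, (hherm x).eq]

end Aux

theorem statement0 {n r : ℕ} (g : (Fin n → ℝ) → Matrix (Fin r) (Fin r) ℂ)
    (hg : IsMetric g) (j k : Fin n) (x : Fin n → ℝ) (u v : Fin r → ℂ) :
    ip (g x) ((Theta g j k x).mulVec u) v = ip (g x) u ((Theta g k j x).mulVec v) := by
  have key := key_matrix hg j k x
  simp only [ip]
  rw [Matrix.mulVec_mulVec, key, ← Matrix.mulVec_mulVec, Matrix.star_mulVec,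
    ← Matrix.dotProduct_mulVec]
end

section
/- Let g be a metric on ℝⁿ that is log concave in the sense of Griffiths. Then det g is a log concave function, i.e. x ↦ log det g(x) is concave. -/
open scoped ComplexOrder
open Matrix MeasureTheory

section Aux
variable {n r : ℕ}

lemma pi_single_expand (v : Fin n → ℝ) : v = ∑ k, v k • (Pi.single k 1 : Fin n → ℝ) := by
  funext j
  simp [Pi.single_apply, Finset.sum_ite_eq]

lemma clm_apply_expand {n : ℕ} (T : (Fin n → ℝ) →L[ℝ] ℂ) (v : Fin n → ℝ) :
    T v = ∑ k, (v k : ℂ) * T (Pi.single k 1) := by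
  conv_lhs => rw [pi_single_expand v]
  rw [map_sum]
  exact Finset.sum_congr rfl fun k _ => by rw [_root_.map_smul, Complex.real_smul]

lemma hasDerivAt_line {f : (Fin n → ℝ) → ℂ} {x v : Fin n → ℝ} {t : ℝ}
    (hf : DifferentiableAt ℝ f (x + t • v)) :
    HasDerivAt (fun s => f (x + s • v)) (∑ k, (v k : ℂ) * pdC k f (x + t • v)) t := by
  have hL : HasDerivAt (fun s : ℝ => x + s • v) v t := by
    simpa using ((hasDerivAt_id t).smul_const v).const_add x
  have h := hf.hasFDerivAt.comp_hasDerivAt t hL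
  have h2 : fderiv ℝ f (x + t • v) v = ∑ k, (v k : ℂ) * pdC k f (x + t • v) :=
    clm_apply_expand _ v
  rw [← h2]
  exact h

lemma cexpand (c : Fin r → ℂ) : c = ∑ a, c a • (Pi.single a 1 : Fin r → ℂ) := by
  funext j
  simp [Pi.single_apply, Finset.sum_ite_eq]

lemma det_updateRow_expand (M : Matrix (Fin r) (Fin r) ℂ) (i : Fin r) (c : Fin r → ℂ) :
    (M.updateRow i c).det = ∑ a, c a * M.adjugate a i := by
  conv_lhs => rw [cexpand c]
  rw [show (M.updateRow i (∑ a, c a • (Pi.single a 1 : Fin r → ℂ))).det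
      = ∑ a, (M.updateRow i (c a • (Pi.single a 1 : Fin r → ℂ))).det from
    (Matrix.detRowAlternating : (Fin r → ℂ) [⋀^Fin r]→ₗ[ℂ] ℂ).map_update_sum
      Finset.univ i (fun a => c a • (Pi.single a 1 : Fin r → ℂ)) M]
  exact Finset.sum_congr rfl fun a _ => by
    rw [Matrix.det_updateRow_smul, Matrix.adjugate_apply]

lemma hasDerivAt_det {A : ℝ → Matrix (Fin r) (Fin r) ℂ} {A' : Matrix (Fin r) (Fin r) ℂ}
    {t : ℝ} (h : ∀ a b, HasDerivAt (fun s => A s a b) (A' a b) t) :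
    HasDerivAt (fun s => (A s).det) (((A t).adjugate * A').trace) t := by
  have hfun : (fun s => (A s).det)
      = fun s => ∑ σ : Equiv.Perm (Fin r), ((Equiv.Perm.sign σ : ℤ) : ℂ) * ∏ i, A s (σ i) i :=
    funext fun s => Matrix.det_apply' _
  have H : HasDerivAt
      (fun s => ∑ σ : Equiv.Perm (Fin r), ((Equiv.Perm.sign σ : ℤ) : ℂ) * ∏ i, A s (σ i) i)
      (∑ σ : Equiv.Perm (Fin r), ((Equiv.Perm.sign σ : ℤ) : ℂ) *
        (∑ i, (∏ j ∈ Finset.univ.erase i, A t (σ j) j) • A' (σ i) i)) t := by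
    refine HasDerivAt.fun_sum fun σ _ => HasDerivAt.const_mul _ ?_
    exact HasDerivAt.fun_finsetProd fun i _ => h (σ i) i
  rw [hfun]
  convert H using 1
  -- coefficient equality
  calc ((A t).adjugate * A').trace
      = ∑ i, ((A t).updateRow i (A' i)).det := by
        rw [Matrix.trace]
        rw [Finset.sum_congr rfl fun i (_ : i ∈ Finset.univ) => det_updateRow_expand (A t) i (A' i)]
        rw [Finset.sum_comm]
        exact Finset.sum_congr rfl fun a _ => by
          simp [Matrix.diag, Matrix.mul_apply, mul_comm]
    _ = ∑ σ : Equiv.Perm (Fin r), ((Equiv.Perm.sign σ : ℤ) : ℂ) *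
        (∑ i, (∏ j ∈ Finset.univ.erase i, A t (σ j) j) • A' (σ i) i) := by
        have e1 : ∀ (i : Fin r) (σ : Equiv.Perm (Fin r)),
            (∏ j, ((A t).updateRow i (A' i)) (σ j) j)
              = A' i (σ.symm i) * ∏ j ∈ Finset.univ.erase (σ.symm i), A t (σ j) j := by
          intro i σ
          rw [← Finset.mul_prod_erase Finset.univ _ (Finset.mem_univ (σ.symm i))]
          congr 1
          · rw [Equiv.apply_symm_apply, Matrix.updateRow_self]
          · refine Finset.prod_congr rfl fun j hj => ?_
            rw [Matrix.updateRow_apply, if_neg]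
            intro hji
            exact (Finset.mem_erase.mp hj).1 (by rw [← hji, Equiv.symm_apply_apply])
        calc ∑ i, ((A t).updateRow i (A' i)).det
            = ∑ i, ∑ σ : Equiv.Perm (Fin r), ((Equiv.Perm.sign σ : ℤ) : ℂ) *
                (A' i (σ.symm i) * ∏ j ∈ Finset.univ.erase (σ.symm i), A t (σ j) j) := by
              refine Finset.sum_congr rfl fun i _ => ?_
              rw [Matrix.det_apply']
              exact Finset.sum_congr rfl fun σ _ => by rw [e1 i σ]
          _ = ∑ σ : Equiv.Perm (Fin r), ∑ i, ((Equiv.Perm.sign σ : ℤ) : ℂ) *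
                (A' i (σ.symm i) * ∏ j ∈ Finset.univ.erase (σ.symm i), A t (σ j) j) :=
              Finset.sum_comm
          _ = _ := by
              refine Finset.sum_congr rfl fun σ _ => ?_
              rw [Finset.mul_sum]
              refine Fintype.sum_equiv σ.symm _ _ fun i => ?_
              simp only [Equiv.apply_symm_apply, smul_eq_mul]
              ring

lemma trace_adjugate_mul {M B : Matrix (Fin r) (Fin r) ℂ} (h : M.det ≠ 0) :
    (M.adjugate * B).trace = M.det * (M⁻¹ * B).trace := by
  have hadj : M.adjugate = M.det • M⁻¹ := by
    rw [Matrix.inv_def, Ring.inverse_eq_inv', smul_smul, mul_inv_cancel₀ h, one_smul]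
  rw [hadj, Matrix.smul_mul, Matrix.trace_smul, smul_eq_mul]

lemma diff_prod {ι : Type*} [DecidableEq ι] {s : Finset ι} {f : ι → (Fin n → ℝ) → ℂ}
    (h : ∀ i ∈ s, Differentiable ℝ (f i)) :
    Differentiable ℝ fun y => ∏ i ∈ s, f i y := by
  classical
  induction s using Finset.induction_on with
  | empty => simpa using differentiable_const (1:ℂ)
  | @insert a s' hx ih =>
    simp only [Finset.prod_insert hx]
    exact (h a (Finset.mem_insert_self a s')).mul
      (ih fun i hi => h i (Finset.mem_insert_of_mem hi))

lemma diff_det_of {M : (Fin n → ℝ) → Matrix (Fin r) (Fin r) ℂ}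
    (h : ∀ a b, Differentiable ℝ fun y => M y a b) :
    Differentiable ℝ fun y => (M y).det := by
  have hfun : (fun y => (M y).det)
      = fun y => ∑ σ : Equiv.Perm (Fin r), ((Equiv.Perm.sign σ : ℤ) : ℂ) * ∏ i, M y (σ i) i :=
    funext fun y => Matrix.det_apply' _
  rw [hfun]
  exact Differentiable.fun_sum fun σ _ =>
    (diff_prod fun i _ => h (σ i) i).const_mul _

lemma diff_adjugate {M : (Fin n → ℝ) → Matrix (Fin r) (Fin r) ℂ}
    (h : ∀ a b, Differentiable ℝ fun y => M y a b) (a b : Fin r) :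
    Differentiable ℝ fun y => (M y).adjugate a b := by
  have hfun : (fun y => (M y).adjugate a b)
      = fun y => ((M y).updateRow b (Pi.single a 1)).det :=
    funext fun y => Matrix.adjugate_apply _ _ _
  rw [hfun]
  refine diff_det_of fun c e => ?_
  by_cases hc : c = b
  · subst hc
    simpa [Matrix.updateRow_self] using differentiable_const (Pi.single a (1:ℂ) e)
  · simpa [Matrix.updateRow_apply, hc] using h c e

open scoped MatrixOrder in
noncomputable def Matrix.PosSemidef.sqrt {M : Matrix (Fin r) (Fin r) ℂ} (_ : M.PosSemidef) :
    Matrix (Fin r) (Fin r) ℂ :=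
  CFC.sqrt M

open scoped MatrixOrder in
lemma Matrix.PosSemidef.sqrt_mul_self {M : Matrix (Fin r) (Fin r) ℂ} (hM : M.PosSemidef) :
    hM.sqrt * hM.sqrt = M :=
  CFC.sqrt_mul_sqrt_self M (Matrix.nonneg_iff_posSemidef.mpr hM)

open scoped MatrixOrder in
lemma Matrix.PosSemidef.posSemidef_sqrt {M : Matrix (Fin r) (Fin r) ℂ} (hM : M.PosSemidef) :
    hM.sqrt.PosSemidef :=
  Matrix.nonneg_iff_posSemidef.mp (CFC.sqrt_nonneg M)

lemma sum_ip_sqrt {M : Matrix (Fin r) (Fin r) ℂ} (hM : M.PosDef)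
    (Θ : Matrix (Fin r) (Fin r) ℂ) :
    ∑ a, ip M (Θ.mulVec ((hM.inv.posSemidef.sqrt).mulVec (Pi.single a 1)))
      ((hM.inv.posSemidef.sqrt).mulVec (Pi.single a 1)) = Θ.trace := by
  set S := hM.inv.posSemidef.sqrt with hSdef
  have hS2 : S * S = M⁻¹ := hM.inv.posSemidef.sqrt_mul_self
  have hSH : Sᴴ = S := (hM.inv.posSemidef.posSemidef_sqrt).1
  have hterm : ∀ a, ip M (Θ.mulVec (S.mulVec (Pi.single a 1))) (S.mulVec (Pi.single a 1))
      = ∑ i, S a i * (M * Θ * S) i a := by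
    intro a
    simp only [ip]
    rw [Matrix.mulVec_mulVec, Matrix.mulVec_mulVec]
    simp only [Matrix.mulVec_single_one, Matrix.col_apply, mul_one, dotProduct, Pi.star_apply]
    refine Finset.sum_congr rfl fun i _ => ?_
    have hstar : star (S i a) = S a i := by
      conv_rhs => rw [← hSH]
      rw [Matrix.conjTranspose_apply]
    rw [hstar]
  rw [Finset.sum_congr rfl fun a _ => hterm a]
  have : ∑ a, ∑ i, S a i * (M * Θ * S) i a = (S * (M * Θ * S)).trace := by
    rw [Matrix.trace]
    exact Finset.sum_congr rfl fun a _ => by simp [Matrix.diag, Matrix.mul_apply]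
  rw [this, Matrix.trace_mul_comm, Matrix.mul_assoc, hS2, Matrix.trace_mul_comm,
    ← Matrix.mul_assoc, Matrix.nonsing_inv_mul M hM.det_pos.ne'.isUnit, Matrix.one_mul]

end Aux

theorem statement4 {n r : ℕ} (g : (Fin n → ℝ) → Matrix (Fin r) (Fin r) ℂ)
    (hg : IsMetric g) (hconc : GriffithsLogConcave g) :
    ConcaveOn ℝ Set.univ fun x => Real.log ((g x).det.re) := by
  obtain ⟨hpos, hC2⟩ := hg
  have hEnt : ∀ a b, Differentiable ℝ fun y => g y a b :=
    fun a b => (hC2 a b).differentiable (by norm_num)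
  have hmpd : ∀ (j : Fin n) a b, Differentiable ℝ fun y => mpd j g y a b := by
    intro j a b
    have h1 : ContDiff ℝ 1 (fderiv ℝ fun y => g y a b) :=
      (hC2 a b).fderiv_right (by norm_num)
    exact (h1.clm_apply contDiff_const).differentiable (by norm_num)
  have hdet0 : ∀ y, (g y).det ≠ 0 := fun y => (hpos y).det_pos.ne'
  have hdetre : ∀ y, 0 < ((g y).det).re := fun y => by
    simpa using (Complex.lt_def.mp (hpos y).det_pos).1
  have hdetim : ∀ y, ((g y).det).im = 0 := fun y => by
    simpa using ((Complex.lt_def.mp (hpos y).det_pos).2).symm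
  have hinv : ∀ a b, Differentiable ℝ fun y => (g y)⁻¹ a b := by
    intro a b
    have hfun : (fun y => (g y)⁻¹ a b)
        = fun y => ((g y).det)⁻¹ * (g y).adjugate a b := by
      funext y
      rw [Matrix.inv_def, Ring.inverse_eq_inv', Matrix.smul_apply, smul_eq_mul]
    rw [hfun]
    exact ((diff_det_of hEnt).inv hdet0).mul (diff_adjugate hEnt a b)
  have hB : ∀ (j : Fin n) a b, Differentiable ℝ fun y => ((g y)⁻¹ * mpd j g y) a b := by
    intro j a b
    have hfun : (fun y => ((g y)⁻¹ * mpd j g y) a b)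
        = fun y => ∑ c, (g y)⁻¹ a c * mpd j g y c b := funext fun y => Matrix.mul_apply
    rw [hfun]
    exact Differentiable.fun_sum fun c _ => (hinv a c).mul (hmpd j c b)
  -- the pointwise trace inequality coming from the Griffiths hypothesis
  have key : ∀ (y : Fin n → ℝ) (v : Fin n → ℝ),
      (∑ j, ∑ k, ((v j : ℂ) * (v k : ℂ)) * (Theta g j k y).trace).re ≤ 0 := by
    intro y v
    set S := (hpos y).inv.posSemidef.sqrt with hSdef
    have htot : ∑ a, ∑ j, ∑ k, ip (g y) ((Theta g j k y).mulVec (S.mulVec (Pi.single a 1)))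
        (S.mulVec (Pi.single a 1)) * ((fun j => (v j : ℂ)) j * star ((fun k => (v k : ℂ)) k))
        ≤ 0 :=
      Finset.sum_nonpos fun a _ => hconc y (S.mulVec (Pi.single a 1)) (fun j => (v j : ℂ))
    have heq : ∑ a, ∑ j, ∑ k, ip (g y) ((Theta g j k y).mulVec (S.mulVec (Pi.single a 1)))
        (S.mulVec (Pi.single a 1)) * ((fun j => (v j : ℂ)) j * star ((fun k => (v k : ℂ)) k))
        = ∑ j, ∑ k, ((v j : ℂ) * (v k : ℂ)) * (Theta g j k y).trace := by
      rw [Finset.sum_comm]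
      refine Finset.sum_congr rfl fun j _ => ?_
      rw [Finset.sum_comm]
      refine Finset.sum_congr rfl fun k _ => ?_
      rw [← Finset.sum_mul, sum_ip_sqrt (hpos y) (Theta g j k y)]
      rw [show star ((v k : ℂ)) = (v k : ℂ) by
        rw [Complex.star_def, Complex.conj_ofReal]]
      ring
    rw [heq] at htot
    simpa using (Complex.le_def.mp htot).1
  -- concavity along each line
  have line : ∀ (x v : Fin n → ℝ),
      ConcaveOn ℝ Set.univ fun t : ℝ => Real.log ((g (x + t • v)).det.re) := by
    intro x v
    set T : Fin n → (Fin n → ℝ) → ℂ := fun j y => ((g y)⁻¹ * mpd j g y).trace with hT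
    set ρ : ℝ → ℝ := fun t => (∑ j, (v j : ℂ) * T j (x + t • v)).re with hρ
    have stepA : ∀ t, HasDerivAt (fun s => Real.log ((g (x + s • v)).det.re)) (ρ t) t := by
      intro t
      have hA' : ∀ a b, HasDerivAt (fun s => g (x + s • v) a b)
          ((∑ j, (v j : ℂ) • mpd j g (x + t • v)) a b) t := by
        intro a b
        have h := hasDerivAt_line (f := fun z => g z a b) (x := x) (v := v) (t := t)
          ((hEnt a b).differentiableAt)
        convert h using 1
        simp [Matrix.sum_apply, Matrix.smul_apply, Matrix.of_apply, Pi.smul_apply, smul_eq_mul, mpd, pdC]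
      have hdetD := hasDerivAt_det hA'
      have hTrEq : ((g (x + t • v)).adjugate * (∑ j, (v j : ℂ) • mpd j g (x + t • v))).trace
          = (g (x + t • v)).det * ∑ j, (v j : ℂ) * T j (x + t • v) := by
        rw [trace_adjugate_mul (hdet0 _)]
        congr 1
        rw [Matrix.mul_sum, Matrix.trace_sum]
        refine Finset.sum_congr rfl fun j _ => ?_
        rw [Matrix.mul_smul, Matrix.trace_smul, smul_eq_mul]
      rw [hTrEq] at hdetD
      have hre : HasDerivAt (fun s => ((g (x + s • v)).det).re)
          (((g (x + t • v)).det * ∑ j, (v j : ℂ) * T j (x + t • v)).re) t := by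
        have h := Complex.reCLM.hasFDerivAt.comp_hasDerivAt t hdetD
        exact h
      have hre' : ((g (x + t • v)).det * ∑ j, (v j : ℂ) * T j (x + t • v)).re
          = ((g (x + t • v)).det).re * ρ t := by
        rw [Complex.mul_re, hdetim _, zero_mul, sub_zero]
      rw [hre'] at hre
      have hlog := (Real.hasDerivAt_log (hdetre (x + t • v)).ne').comp t hre
      rw [inv_mul_cancel_left₀ (hdetre (x + t • v)).ne'] at hlog
      exact hlog
    have stepB : ∀ t, HasDerivAt ρ
        ((∑ j, ∑ k, ((v j : ℂ) * (v k : ℂ)) * (Theta g j k (x + t • v)).trace).re) t := by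
      intro t
      have hTj : ∀ j, HasDerivAt (fun s : ℝ => T j (x + s • v))
          (∑ k, (v k : ℂ) * (Theta g j k (x + t • v)).trace) t := by
        intro j
        have hfun : (fun s : ℝ => T j (x + s • v))
            = fun s : ℝ => ∑ a, ((g (x + s • v))⁻¹ * mpd j g (x + s • v)) a a := by
          funext s
          simp [hT, Matrix.trace, Matrix.diag]
        have hsum := HasDerivAt.fun_sum (u := Finset.univ) fun (a : Fin r) _ =>
          hasDerivAt_line (f := fun z => ((g z)⁻¹ * mpd j g z) a a) (x := x) (v := v) (t := t)
            ((hB j a a).differentiableAt)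
        rw [hfun]
        have e2 : (∑ k, (v k : ℂ) * (Theta g j k (x + t • v)).trace)
            = ∑ a, ∑ k, (v k : ℂ) *
                pdC k (fun z => ((g z)⁻¹ * mpd j g z) a a) (x + t • v) := by
          simp only [Matrix.trace, Matrix.diag, Finset.mul_sum, Theta, mpd, Matrix.of_apply]
          exact Finset.sum_comm
        rw [e2]
        exact hsum
      have hsum2 : HasDerivAt (fun s : ℝ => ∑ j, (v j : ℂ) * T j (x + s • v))
          (∑ j, (v j : ℂ) * ∑ k, (v k : ℂ) * (Theta g j k (x + t • v)).trace) t :=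
        HasDerivAt.fun_sum fun j _ => (hTj j).const_mul _
      have e3 : (∑ j, (v j : ℂ) * ∑ k, (v k : ℂ) * (Theta g j k (x + t • v)).trace)
          = ∑ j, ∑ k, ((v j : ℂ) * (v k : ℂ)) * (Theta g j k (x + t • v)).trace := by
        refine Finset.sum_congr rfl fun j _ => ?_
        rw [Finset.mul_sum]
        exact Finset.sum_congr rfl fun k _ => by ring
      rw [e3] at hsum2
      exact Complex.reCLM.hasFDerivAt.comp_hasDerivAt t hsum2
    have hφdiff : Differentiable ℝ (fun t : ℝ => Real.log ((g (x + t • v)).det.re)) :=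
      fun t => (stepA t).differentiableAt
    have hderiv : deriv (fun t : ℝ => Real.log ((g (x + t • v)).det.re)) = ρ :=
      funext fun t => (stepA t).deriv
    have hρanti : Antitone ρ := by
      refine antitone_of_deriv_nonpos (fun t => (stepB t).differentiableAt) fun t => ?_
      rw [(stepB t).deriv]
      exact key (x + t • v) v
    exact Antitone.concaveOn_univ_of_deriv hφdiff (hderiv ▸ hρanti)
  -- conclude
  refine ⟨convex_univ, ?_⟩
  intro p _ q _ a b ha hb hab
  have hl := (line p (q - p)).2 (Set.mem_univ (0:ℝ)) (Set.mem_univ (1:ℝ)) ha hb hab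
  have h0 : p + (0:ℝ) • (q - p) = p := by simp
  have h1 : p + (1:ℝ) • (q - p) = q := by
    rw [one_smul]
    abel
  have hb2 : p + b • (q - p) = a • p + b • q := by
    have ha' : a = 1 - b := by linarith
    subst ha'
    module
  simp only [smul_eq_mul, mul_zero, mul_one, zero_add, h0, h1] at hl
  rw [hb2] at hl
  simpa [smul_eq_mul] using hl
end

section
/- (Schur product theorem) If A, B ∈ ℂ^{n×n} are positive semidefinite Hermitian matrices, then their entrywise (Hadamard) product M, with M_{jk} = A_{jk} B_{jk}, is also positive semidefinite. -/
open scoped ComplexOrder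
open Matrix MeasureTheory

theorem statement8 {n : ℕ} (A B : Matrix (Fin n) (Fin n) ℂ)
    (hA : A.PosSemidef) (hB : B.PosSemidef) :
    (Matrix.of fun j k => A j k * B j k).PosSemidef := by
  open scoped MatrixOrder Matrix.Norms.L2Operator in
  obtain ⟨C, hC'⟩ := CStarAlgebra.nonneg_iff_eq_star_mul_self.mp hA.nonneg
  have hC : A = Cᴴ * C := hC'
  refine Matrix.PosSemidef.of_dotProduct_mulVec_nonneg ?_ ?_
  · ext j k
    simp only [Matrix.conjTranspose_apply, Matrix.of_apply, star_mul']
    rw [hA.1.apply, hB.1.apply, mul_comm]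
  · intro x
    have key : star x ⬝ᵥ (Matrix.of fun j k => A j k * B j k).mulVec x
        = ∑ l, star (fun j => C l j * x j) ⬝ᵥ B.mulVec (fun j => C l j * x j) := by
      simp only [dotProduct, Matrix.mulVec, dotProduct, Matrix.of_apply, hC,
        Matrix.mul_apply, Matrix.conjTranspose_apply, Pi.star_apply, star_mul',
        Finset.mul_sum, Finset.sum_mul]
      conv_lhs => enter [2, l]; rw [Finset.sum_comm]
      rw [Finset.sum_comm]
      refine Finset.sum_congr rfl fun m _ => Finset.sum_congr rfl fun l _ =>
        Finset.sum_congr rfl fun k _ => by ring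
    rw [key]
    exact Finset.sum_nonneg fun l _ => hB.dotProduct_mulVec_nonneg _
end

section
/- Let g : ℝ × ℝ^m → ℂ^{r×r}, g(y,t) = e^{-φ(y,t)} A(y), where φ : ℝ^{1+m} → ℝ is twice differentiable and convex, and A is a metric on ℝ with Θ^A := (d/dy)(A⁻¹ dA/dy) negative semidefinite (as a Hermitian form with respect to g). Then g is log concave in the sense of Nakano on ℝ^{1+m}. -/
open scoped ComplexOrder
open Matrix MeasureTheory

/-- Entrywise derivative of a matrix-valued function of one real variable. -/
noncomputable def mderiv {r : ℕ} (A : ℝ → Matrix (Fin r) (Fin r) ℂ) (s : ℝ) :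
    Matrix (Fin r) (Fin r) ℂ :=
  Matrix.of fun a b => deriv (fun t => A t a b) s

/-- `Θ^A = (d/dy)(A⁻¹ dA/dy)` for a metric on `ℝ`. -/
noncomputable def ThetaOne {r : ℕ} (A : ℝ → Matrix (Fin r) (Fin r) ℂ) (y : ℝ) :
    Matrix (Fin r) (Fin r) ℂ :=
  mderiv (fun s => (A s)⁻¹ * mderiv A s) y


/-! ### Auxiliary lemmas -/

section Aux1

lemma aux_monotone_deriv_nonneg {g : ℝ → ℝ} (hg : Monotone g) (x : ℝ)
    (hd : DifferentiableAt ℝ g x) : 0 ≤ deriv g x := by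
  have h := hd.hasDerivAt
  rw [hasDerivAt_iff_tendsto_slope] at h
  refine ge_of_tendsto h ?_
  filter_upwards [self_mem_nhdsWithin] with y hy
  rw [slope_def_field]
  rcases lt_or_gt_of_ne (Ne.symm hy) with h1 | h1
  · exact div_nonneg (sub_nonneg.2 (hg h1.le)) (sub_nonneg.2 h1.le)
  · exact div_nonneg_of_nonpos (sub_nonpos.2 (hg h1.le)) (sub_nonpos.2 h1.le)

variable {E : Type*} [NormedAddCommGroup E] [NormedSpace ℝ E] {n : WithTop ℕ∞}

lemma aux_contDiff_finprod {κ : Type*} (s : Finset κ) {f : κ → E → ℂ}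
    (h : ∀ i ∈ s, ContDiff ℝ n (f i)) :
    ContDiff ℝ n (fun x => ∏ i ∈ s, f i x) := by
  classical
  induction s using Finset.induction with
  | empty => simpa using contDiff_const
  | insert _ _ hi ih =>
    simp only [Finset.prod_insert hi]
    exact (h _ (Finset.mem_insert_self _ _)).mul
      (ih fun i his => h i (Finset.mem_insert_of_mem his))

lemma aux_contDiff_det {r : ℕ} {f : E → Matrix (Fin r) (Fin r) ℂ}
    (h : ∀ a b, ContDiff ℝ n fun x => f x a b) :
    ContDiff ℝ n fun x => (f x).det := by
  simp only [Matrix.det_apply]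
  refine ContDiff.sum fun σ _ => ?_
  have : ContDiff ℝ n fun x => ∏ i, f x (σ i) i :=
    aux_contDiff_finprod _ fun i _ => h _ _
  simpa [Units.smul_def] using this.const_smul ((Equiv.Perm.sign σ : ℤ) : ℂ)

lemma aux_contDiff_adjugate {r : ℕ} {f : E → Matrix (Fin r) (Fin r) ℂ}
    (h : ∀ a b, ContDiff ℝ n fun x => f x a b) (a b : Fin r) :
    ContDiff ℝ n fun x => (f x).adjugate a b := by
  simp only [Matrix.adjugate_apply]
  refine aux_contDiff_det fun i j => ?_
  simp only [Matrix.updateRow_apply]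
  by_cases hib : i = b
  · simpa [hib] using contDiff_const
  · simpa [hib] using h i j

lemma aux_contDiff_inv_entry {r : ℕ} {f : E → Matrix (Fin r) (Fin r) ℂ}
    (h : ∀ a b, ContDiff ℝ n fun x => f x a b)
    (hdet : ∀ x, (f x).det ≠ 0) (a b : Fin r) :
    ContDiff ℝ n fun x => (f x)⁻¹ a b := by
  have : (fun x => (f x)⁻¹ a b) = fun x => ((f x).det)⁻¹ * (f x).adjugate a b := by
    funext x
    rw [Matrix.inv_def]
    simp [Matrix.smul_apply, smul_eq_mul]
  rw [this]
  exact ((aux_contDiff_det h).inv hdet).mul (aux_contDiff_adjugate h a b)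

end Aux1

section Aux2

variable {ι : Type*} [Fintype ι] [DecidableEq ι] {φ : (ι → ℝ) → ℝ}

omit [DecidableEq ι] in
lemma aux_hessian_nonneg (hφC : ContDiff ℝ 2 φ) (hφcvx : ConvexOn ℝ Set.univ φ)
    (x v : ι → ℝ) : 0 ≤ fderiv ℝ (fderiv ℝ φ) x v v := by
  have hd1 : Differentiable ℝ φ := hφC.differentiable two_ne_zero
  have hC1 : ContDiff ℝ 1 (fderiv ℝ φ) := hφC.fderiv_right (le_refl _)
  have hd2 : Differentiable ℝ (fderiv ℝ φ) := hC1.differentiable one_ne_zero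
  set L : ℝ → ι → ℝ := fun t => x + t • v with hL
  have hLd : ∀ t, HasDerivAt L v t := by
    intro t
    have := ((hasDerivAt_id t).smul_const v).const_add x
    rw [one_smul] at this
    exact this
  set ψ : ℝ → ℝ := fun t => φ (L t) with hψ
  have hψd : ∀ t, HasDerivAt ψ (fderiv ℝ φ (L t) v) t := fun t =>
    (hd1 (L t)).hasFDerivAt.comp_hasDerivAt t (hLd t)
  have hψderiv : deriv ψ = fun t => fderiv ℝ φ (L t) v := funext fun t => (hψd t).deriv
  have hψcvx : ConvexOn ℝ Set.univ ψ := by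
    have aff : ConvexOn ℝ ((AffineMap.lineMap (x : ι → ℝ) (x + v)) ⁻¹' Set.univ)
        (φ ∘ (AffineMap.lineMap (x : ι → ℝ) (x + v))) :=
      hφcvx.comp_affineMap _
    have : ψ = φ ∘ (AffineMap.lineMap (x : ι → ℝ) (x + v)) := by
      funext t
      simp [hψ, hL, AffineMap.lineMap_apply, add_comm]
    rw [this]
    simpa using aff
  have hmono : Monotone (deriv ψ) := by
    have := hψcvx.monotoneOn_deriv (fun t _ => (hψd t).differentiableAt)
    rw [← monotoneOn_univ]
    exact this
  have hdd : HasDerivAt (fun t => fderiv ℝ φ (L t) v)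
      (fderiv ℝ (fderiv ℝ φ) x v v) 0 := by
    have h1 : HasDerivAt (fun t => fderiv ℝ φ (L t))
        (fderiv ℝ (fderiv ℝ φ) x v) 0 := by
      have := (hd2 (L 0)).hasFDerivAt.comp_hasDerivAt 0 (hLd 0)
      simpa [hL, Function.comp_def] using this
    have := (ContinuousLinearMap.apply ℝ ℝ v).hasFDerivAt.comp_hasDerivAt 0 h1
    simpa [Function.comp_def] using this
  have hdd' : DifferentiableAt ℝ (deriv ψ) 0 := by
    rw [hψderiv]; exact hdd.differentiableAt
  have := aux_monotone_deriv_nonneg hmono 0 hdd'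
  rwa [hψderiv, hdd.deriv] at this

lemma aux_pi_eq_sum_single (v : ι → ℝ) : v = ∑ k, v k • (Pi.single k 1 : ι → ℝ) := by
  funext i
  simp [Finset.sum_apply, Pi.single_apply]

lemma aux_clm1_apply_sum (w : (ι → ℝ) →L[ℝ] ℝ) (v : ι → ℝ) :
    w v = ∑ j, v j * w (Pi.single j 1) := by
  conv_lhs => rw [aux_pi_eq_sum_single v]
  rw [_root_.map_sum]
  simp [smul_eq_mul]

lemma aux_clm2_apply_sum (H : (ι → ℝ) →L[ℝ] (ι → ℝ) →L[ℝ] ℝ) (v : ι → ℝ) :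
    H v v = ∑ k, ∑ j, v k * (v j * H (Pi.single k 1) (Pi.single j 1)) := by
  have h2 : H v = ∑ k, v k • H (Pi.single k 1) := by
    conv_lhs => rw [aux_pi_eq_sum_single v]
    rw [_root_.map_sum]
    simp
  rw [h2]
  simp only [ContinuousLinearMap.coe_sum', ContinuousLinearMap.coe_smul', Finset.sum_apply,
    Pi.smul_apply, smul_eq_mul]
  refine Finset.sum_congr rfl fun k _ => ?_
  rw [aux_clm1_apply_sum (H (Pi.single k 1)) v, Finset.mul_sum]

lemma aux_hessian_matrix_posSemidef (hφC : ContDiff ℝ 2 φ)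
    (hφcvx : ConvexOn ℝ Set.univ φ) (x : ι → ℝ) :
    (Matrix.of fun j k =>
      fderiv ℝ (fderiv ℝ φ) x (Pi.single k 1) (Pi.single j 1) : Matrix ι ι ℝ).PosSemidef := by
  have hd1 : Differentiable ℝ φ := hφC.differentiable two_ne_zero
  have hC1 : ContDiff ℝ 1 (fderiv ℝ φ) := hφC.fderiv_right (le_refl _)
  have hd2 : Differentiable ℝ (fderiv ℝ φ) := hC1.differentiable one_ne_zero
  have hsymm : ∀ v w, fderiv ℝ (fderiv ℝ φ) x v w = fderiv ℝ (fderiv ℝ φ) x w v :=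
    second_derivative_symmetric (fun y => (hd1 y).hasFDerivAt) (hd2 x).hasFDerivAt
  refine Matrix.posSemidef_iff_dotProduct_mulVec.mpr ⟨?_, ?_⟩
  · ext j k
    simp only [Matrix.conjTranspose_apply, Matrix.of_apply, star_trivial]
    exact hsymm _ _
  · intro v
    have h0 := aux_hessian_nonneg hφC hφcvx x v
    rw [aux_clm2_apply_sum (fderiv ℝ (fderiv ℝ φ) x) v, Finset.sum_comm] at h0
    simpa [dotProduct, Matrix.mulVec, star_trivial, Finset.mul_sum, mul_assoc,
      mul_comm, mul_left_comm] using h0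

lemma aux_pdR_pdR (hφC : ContDiff ℝ 2 φ) (j k : ι) (x : ι → ℝ) :
    pdR k (pdR j φ) x = fderiv ℝ (fderiv ℝ φ) x (Pi.single k 1) (Pi.single j 1) := by
  have hC1 : ContDiff ℝ 1 (fderiv ℝ φ) := hφC.fderiv_right (le_refl _)
  have hd2 : Differentiable ℝ (fderiv ℝ φ) := hC1.differentiable one_ne_zero
  show fderiv ℝ (fun y => fderiv ℝ φ y (Pi.single j 1)) x (Pi.single k 1) = _
  rw [fderiv_clm_apply (hd2 x) (differentiableAt_const _)]
  simp

end Aux2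

section Aux3

variable {m r : ℕ} {φ : (Fin (m + 1) → ℝ) → ℝ} {A : ℝ → Matrix (Fin r) (Fin r) ℂ}

lemma aux_mpd_g (hφC : ContDiff ℝ 2 φ) (hAC : ∀ a b, ContDiff ℝ 2 fun y => A y a b)
    (j : Fin (m + 1)) (y : Fin (m + 1) → ℝ) :
    mpd j (fun x => Complex.exp (-(φ x : ℂ)) • A (x 0)) y =
      Complex.exp (-(φ y : ℂ)) •
        ((-(pdR j φ y : ℂ)) • A (y 0)
          + (((Pi.single j 1 : Fin (m + 1) → ℝ) 0 : ℝ) : ℂ) • mderiv A (y 0)) := by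
  ext a b
  have hφd : HasFDerivAt φ (fderiv ℝ φ y) y := ((hφC.differentiable two_ne_zero) y).hasFDerivAt
  have hu : HasFDerivAt (fun z => Complex.exp (-(φ z : ℂ)))
      (Complex.exp (-(φ y : ℂ)) • (-(Complex.ofRealCLM.comp (fderiv ℝ φ y)))) y :=
    ((Complex.ofRealCLM.hasFDerivAt.comp y hφd).neg).cexp
  have hAd : HasDerivAt (fun t => A t a b) (deriv (fun t => A t a b) (y 0)) (y 0) :=
    (((hAC a b).differentiable two_ne_zero) (y 0)).hasDerivAt
  have hw : HasFDerivAt (fun z : Fin (m + 1) → ℝ => A (z 0) a b)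
      (((1 : ℝ →L[ℝ] ℝ).smulRight (deriv (fun t => A t a b) (y 0))).comp
        (ContinuousLinearMap.proj 0)) y := by
    exact (hasDerivAt_iff_hasFDerivAt.mp hAd).comp y
      (ContinuousLinearMap.proj (R := ℝ) (φ := fun _ : Fin (m + 1) => ℝ) 0).hasFDerivAt
  have hprod := hu.mul hw
  show pdC j (fun z => (Complex.exp (-(φ z : ℂ)) • A (z 0)) a b) y = _
  have hfun : (fun z : Fin (m + 1) → ℝ => (Complex.exp (-(φ z : ℂ)) • A (z 0)) a b)
      = fun z => Complex.exp (-(φ z : ℂ)) * A (z 0) a b := by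
    funext z; simp [Matrix.smul_apply, smul_eq_mul]
  rw [pdC, hfun, HasFDerivAt.fderiv (f := fun z => Complex.exp (-(φ z : ℂ)) * A (z 0) a b) hprod]
  simp only [ContinuousLinearMap.add_apply, ContinuousLinearMap.coe_smul', Pi.smul_apply,
    ContinuousLinearMap.comp_apply, ContinuousLinearMap.smulRight_apply,
    ContinuousLinearMap.one_apply, ContinuousLinearMap.neg_apply, ContinuousLinearMap.proj_apply,
    Complex.ofRealCLM_apply, smul_eq_mul, Matrix.smul_apply, Matrix.add_apply]
  simp only [pdR, Complex.real_smul]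
  have hm : mderiv A (y 0) a b = deriv (fun t => A t a b) (y 0) := rfl
  rw [hm]
  ring

lemma aux_g_inv (hApos : ∀ y, (A y).PosDef) (y : Fin (m + 1) → ℝ) :
    (Complex.exp (-(φ y : ℂ)) • A (y 0))⁻¹
      = (Complex.exp (-(φ y : ℂ)))⁻¹ • (A (y 0))⁻¹ := by
  have hdet : IsUnit (A (y 0)).det := by
    rw [← Matrix.isUnit_iff_isUnit_det]; exact (hApos (y 0)).isUnit
  have hc : Complex.exp (-(φ y : ℂ)) ≠ 0 := Complex.exp_ne_zero _
  apply Matrix.inv_eq_right_inv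
  rw [Matrix.smul_mul, Matrix.mul_smul, smul_smul, mul_inv_cancel₀ hc, one_smul,
    Matrix.mul_nonsing_inv _ hdet]

lemma aux_inner (hφC : ContDiff ℝ 2 φ) (hAC : ∀ a b, ContDiff ℝ 2 fun y => A y a b)
    (hApos : ∀ y, (A y).PosDef) (j : Fin (m + 1)) (y : Fin (m + 1) → ℝ) :
    (Complex.exp (-(φ y : ℂ)) • A (y 0))⁻¹
        * mpd j (fun x => Complex.exp (-(φ x : ℂ)) • A (x 0)) y
      = (-(pdR j φ y : ℂ)) • (1 : Matrix (Fin r) (Fin r) ℂ)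
        + (((Pi.single j 1 : Fin (m + 1) → ℝ) 0 : ℝ) : ℂ)
            • ((A (y 0))⁻¹ * mderiv A (y 0)) := by
  have hdet : IsUnit (A (y 0)).det := by
    rw [← Matrix.isUnit_iff_isUnit_det]; exact (hApos (y 0)).isUnit
  have hc : Complex.exp (-(φ y : ℂ)) ≠ 0 := Complex.exp_ne_zero _
  rw [aux_mpd_g hφC hAC, aux_g_inv hApos]
  rw [Matrix.smul_mul, Matrix.mul_smul, smul_smul, inv_mul_cancel₀ hc, one_smul]
  rw [Matrix.mul_add, Matrix.mul_smul, Matrix.mul_smul, Matrix.nonsing_inv_mul _ hdet]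

lemma aux_F_contDiff (hAC : ∀ a b, ContDiff ℝ 2 fun y => A y a b)
    (hApos : ∀ y, (A y).PosDef) (a b : Fin r) :
    ContDiff ℝ 1 fun s => ((A s)⁻¹ * mderiv A s) a b := by
  have hdet : ∀ s, (A s).det ≠ 0 := fun s => by
    have h1 : IsUnit (A s) := (hApos s).isUnit
    rw [Matrix.isUnit_iff_isUnit_det, isUnit_iff_ne_zero] at h1
    exact h1
  have hAinv : ∀ a b, ContDiff ℝ 1 fun s => (A s)⁻¹ a b :=
    aux_contDiff_inv_entry (fun a b => (hAC a b).of_le one_le_two) hdet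
  have hA' : ∀ c d, ContDiff ℝ 1 fun s => deriv (fun t => A t c d) s := by
    intro c d
    have h := hAC c d
    rw [show (2 : WithTop ℕ∞) = 1 + 1 by norm_num] at h
    exact (contDiff_succ_iff_deriv.mp h).2.2
  have : (fun s => ((A s)⁻¹ * mderiv A s) a b)
      = fun s => ∑ c, (A s)⁻¹ a c * deriv (fun t => A t c b) s := by
    funext s
    simp [Matrix.mul_apply, mderiv]
  rw [this]
  exact ContDiff.sum fun c _ => (hAinv a c).mul (hA' c b)

lemma aux_theta (hφC : ContDiff ℝ 2 φ) (hAC : ∀ a b, ContDiff ℝ 2 fun y => A y a b)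
    (hApos : ∀ y, (A y).PosDef) (j k : Fin (m + 1)) (x : Fin (m + 1) → ℝ) :
    Theta (fun x => Complex.exp (-(φ x : ℂ)) • A (x 0)) j k x
      = (-(pdR k (pdR j φ) x : ℂ)) • (1 : Matrix (Fin r) (Fin r) ℂ)
        + ((((Pi.single j 1 : Fin (m + 1) → ℝ) 0
            * (Pi.single k 1 : Fin (m + 1) → ℝ) 0 : ℝ)) : ℂ) • ThetaOne A (x 0) := by
  have hrw : (fun y => ((fun x => Complex.exp (-(φ x : ℂ)) • A (x 0)) y)⁻¹
        * mpd j (fun x => Complex.exp (-(φ x : ℂ)) • A (x 0)) y)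
      = fun y => (-(pdR j φ y : ℂ)) • (1 : Matrix (Fin r) (Fin r) ℂ)
        + (((Pi.single j 1 : Fin (m + 1) → ℝ) 0 : ℝ) : ℂ)
            • ((A (y 0))⁻¹ * mderiv A (y 0)) :=
    funext fun y => aux_inner hφC hAC hApos j y
  show mpd k _ x = _
  rw [hrw]
  ext a b
  have hC1 : ContDiff ℝ 1 (fderiv ℝ φ) := hφC.fderiv_right (le_refl _)
  have hd2 : Differentiable ℝ (fderiv ℝ φ) := hC1.differentiable one_ne_zero
  have h1 : DifferentiableAt ℝ (pdR j φ) x :=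
    DifferentiableAt.clm_apply (hd2 x) (differentiableAt_const _)
  have hc : HasFDerivAt (fun y => ((pdR j φ y : ℝ) : ℂ))
      (Complex.ofRealCLM.comp (fderiv ℝ (pdR j φ) x)) x :=
    Complex.ofRealCLM.hasFDerivAt.comp x h1.hasFDerivAt
  have hmul := (hc.neg).mul_const ((1 : Matrix (Fin r) (Fin r) ℂ) a b)
  have hFd : HasDerivAt (fun s => ((A s)⁻¹ * mderiv A s) a b)
      (deriv (fun s => ((A s)⁻¹ * mderiv A s) a b) (x 0)) (x 0) :=
    (((aux_F_contDiff hAC hApos a b).differentiable one_ne_zero) (x 0)).hasDerivAt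
  have hs2 : HasFDerivAt (fun y : Fin (m + 1) → ℝ => ((A (y 0))⁻¹ * mderiv A (y 0)) a b)
      (((1 : ℝ →L[ℝ] ℝ).smulRight
          (deriv (fun s => ((A s)⁻¹ * mderiv A s) a b) (x 0))).comp
        (ContinuousLinearMap.proj 0)) x := by
    exact (hasDerivAt_iff_hasFDerivAt.mp hFd).comp x
      (ContinuousLinearMap.proj (R := ℝ) (φ := fun _ : Fin (m + 1) => ℝ) 0).hasFDerivAt
  have hs2' := hs2.const_mul ((((Pi.single j 1 : Fin (m + 1) → ℝ) 0 : ℝ) : ℂ))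
  have htot := hmul.add hs2'
  show pdC k (fun y => ((-(pdR j φ y : ℂ)) • (1 : Matrix (Fin r) (Fin r) ℂ)
      + (((Pi.single j 1 : Fin (m + 1) → ℝ) 0 : ℝ) : ℂ)
          • ((A (y 0))⁻¹ * mderiv A (y 0))) a b) x = _
  have hfun : (fun y : Fin (m + 1) → ℝ => ((-(pdR j φ y : ℂ)) • (1 : Matrix (Fin r) (Fin r) ℂ)
      + (((Pi.single j 1 : Fin (m + 1) → ℝ) 0 : ℝ) : ℂ)
          • ((A (y 0))⁻¹ * mderiv A (y 0))) a b)
      = fun y => (-(pdR j φ y : ℂ)) * (1 : Matrix (Fin r) (Fin r) ℂ) a b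
        + (((Pi.single j 1 : Fin (m + 1) → ℝ) 0 : ℝ) : ℂ)
            * ((A (y 0))⁻¹ * mderiv A (y 0)) a b := by
    funext y
    simp [Matrix.add_apply, Matrix.smul_apply, smul_eq_mul]
  rw [pdC, hfun, HasFDerivAt.fderiv (f := fun y : Fin (m + 1) → ℝ => (-(pdR j φ y : ℂ)) * (1 : Matrix (Fin r) (Fin r) ℂ) a b
      + (((Pi.single j 1 : Fin (m + 1) → ℝ) 0 : ℝ) : ℂ) * ((A (y 0))⁻¹ * mderiv A (y 0)) a b) htot]
  have hth : ThetaOne A (x 0) a b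
      = deriv (fun s => ((A s)⁻¹ * mderiv A s) a b) (x 0) := rfl
  have hder : fderiv ℝ (pdR j φ) x (Pi.single k 1) = pdR k (pdR j φ) x := rfl
  simp only [ContinuousLinearMap.add_apply, ContinuousLinearMap.comp_apply,
    ContinuousLinearMap.neg_apply, ContinuousLinearMap.smulRight_apply,
    ContinuousLinearMap.one_apply, ContinuousLinearMap.proj_apply,
    Complex.ofRealCLM_apply, ContinuousLinearMap.coe_smul', Pi.smul_apply, smul_eq_mul]
  rw [Matrix.add_apply, Matrix.smul_apply, Matrix.smul_apply, hth, hder]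
  push_cast
  simp only [smul_eq_mul, Complex.real_smul]
  ring

lemma aux_sum_dotProduct {r : ℕ} {N : Type*} [Fintype N] (f : N → Fin r → ℂ) (w : Fin r → ℂ) :
    (∑ k, f k) ⬝ᵥ w = ∑ k, f k ⬝ᵥ w := by
  simp only [dotProduct, Finset.sum_apply, Finset.sum_mul]
  exact Finset.sum_comm

lemma aux_dotProduct_sum {r : ℕ} {N : Type*} [Fintype N] (v : Fin r → ℂ) (f : N → Fin r → ℂ) :
    v ⬝ᵥ (∑ k, f k) = ∑ k, v ⬝ᵥ f k := by
  simp only [dotProduct, Finset.sum_apply, Finset.mul_sum]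
  exact Finset.sum_comm

lemma aux_quad {r : ℕ} (G : Matrix (Fin r) (Fin r) ℂ) {N : Type*} [Fintype N]
    (c : N → ℝ) (u : N → Fin r → ℂ) :
    star (∑ j, (c j : ℂ) • u j) ⬝ᵥ G.mulVec (∑ j, (c j : ℂ) • u j)
      = ∑ k, ∑ j, (c k : ℂ) * ((c j : ℂ) * (star (u k) ⬝ᵥ G.mulVec (u j))) := by
  have h1 : G.mulVec (∑ j, (c j : ℂ) • u j) = ∑ j, (c j : ℂ) • G.mulVec (u j) := by
    simp only [← Matrix.mulVecLin_apply, _root_.map_sum, _root_.map_smul]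
  have h2 : star (∑ j, (c j : ℂ) • u j) = ∑ k, (c k : ℂ) • star (u k) := by
    rw [star_sum]
    refine Finset.sum_congr rfl fun k _ => ?_
    rw [star_smul, Complex.star_def, Complex.conj_ofReal]
  rw [h1, h2, aux_sum_dotProduct]
  refine Finset.sum_congr rfl fun k _ => ?_
  rw [aux_dotProduct_sum]
  refine Finset.sum_congr rfl fun j _ => ?_
  rw [smul_dotProduct, dotProduct_smul, smul_eq_mul, smul_eq_mul]

end Aux3

theorem statement10 {m r : ℕ} (φ : (Fin (m + 1) → ℝ) → ℝ)
    (hφC : ContDiff ℝ 2 φ) (hφcvx : ConvexOn ℝ Set.univ φ)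
    (A : ℝ → Matrix (Fin r) (Fin r) ℂ)
    (hApos : ∀ y, (A y).PosDef) (hAC : ∀ a b, ContDiff ℝ 2 fun y => A y a b)
    (hΘA : ∀ (y : ℝ) (u : Fin r → ℂ),
      star u ⬝ᵥ (A y * ThetaOne A y).mulVec u ≤ 0) :
    NakanoLogConcave fun x : Fin (m + 1) → ℝ =>
      Complex.exp (-(φ x : ℂ)) • A (x 0) := by
  intro x u
  beta_reduce
  have hdet : IsUnit (A (x 0)).det := by
    rw [← Matrix.isUnit_iff_isUnit_det]; exact (hApos (x 0)).isUnit
  set G : Matrix (Fin r) (Fin r) ℂ := A (x 0) with hG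
  set T : Matrix (Fin r) (Fin r) ℂ := ThetaOne A (x 0) with hT
  set ρ : ℂ := Complex.exp (-(φ x : ℂ)) with hρ
  set H : Matrix (Fin (m + 1)) (Fin (m + 1)) ℝ := Matrix.of fun j k =>
    fderiv ℝ (fderiv ℝ φ) x (Pi.single k 1) (Pi.single j 1) with hH
  set cc : Fin (m + 1) → ℂ := fun j => (((Pi.single j 1 : Fin (m + 1) → ℝ) 0 : ℝ) : ℂ) with hcc
  set R : Fin (m + 1) → Fin (m + 1) → ℂ := fun j k => star (u k) ⬝ᵥ G.mulVec (u j) with hR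
  set Q : Fin (m + 1) → Fin (m + 1) → ℂ := fun j k => star (u k) ⬝ᵥ (G * T).mulVec (u j) with hQ
  have hρ0 : 0 ≤ ρ := by
    have : ρ = ((Real.exp (-(φ x)) : ℝ) : ℂ) := by
      rw [hρ, Complex.ofReal_exp, Complex.ofReal_neg]
    rw [this]
    exact_mod_cast (Real.exp_pos _).le
  have hθ : ∀ j k : Fin (m + 1),
      Theta (fun x => Complex.exp (-(φ x : ℂ)) • A (x 0)) j k x
        = (-(H j k : ℂ)) • (1 : Matrix (Fin r) (Fin r) ℂ) + (cc j * cc k) • T := by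
    intro j k
    rw [aux_theta hφC hAC hApos j k x]
    congr 1
    · congr 1
      rw [aux_pdR_pdR hφC]
      rfl
    · congr 1
      push_cast
      rfl
  have hsummand : ∀ j k : Fin (m + 1),
      ip (ρ • G) ((Theta (fun x => Complex.exp (-(φ x : ℂ)) • A (x 0)) j k x).mulVec (u j)) (u k)
        = -((H j k : ℂ) * (ρ * R j k)) + (cc j * cc k) * (ρ * Q j k) := by
    intro j k
    rw [hθ j k]
    simp only [ip, Matrix.add_mulVec, Matrix.smul_mulVec, Matrix.one_mulVec,
      Matrix.mulVec_add, Matrix.mulVec_smul, dotProduct_add, dotProduct_smul,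
      smul_eq_mul, Matrix.mulVec_mulVec, Matrix.smul_mul, hR, hQ]
    ring
  calc ∑ j, ∑ k, ip (ρ • G)
        ((Theta (fun x => Complex.exp (-(φ x : ℂ)) • A (x 0)) j k x).mulVec (u j)) (u k)
      = (∑ j, ∑ k, -((H j k : ℂ) * (ρ * R j k)))
          + ∑ j, ∑ k, (cc j * cc k) * (ρ * Q j k) := by
        rw [← Finset.sum_add_distrib]
        refine Finset.sum_congr rfl fun j _ => ?_
        rw [← Finset.sum_add_distrib]
        exact Finset.sum_congr rfl fun k _ => hsummand j k
    _ ≤ 0 := by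
        apply add_nonpos
        · -- Hessian part
          have hHps : H.PosSemidef := aux_hessian_matrix_posSemidef hφC hφcvx x
          obtain ⟨B, hB⟩ : ∃ B : Matrix (Fin (m + 1)) (Fin (m + 1)) ℝ, H = Bᴴ * B := by
            open scoped MatrixOrder in exact CStarAlgebra.nonneg_iff_eq_star_mul_self.mp hHps.nonneg
          have hHe : ∀ j k, (H j k : ℂ) = ∑ l, (B l j : ℂ) * (B l k : ℂ) := by
            intro j k
            rw [hB, Matrix.mul_apply]
            push_cast
            refine Finset.sum_congr rfl fun l _ => ?_
            rw [Matrix.conjTranspose_apply, star_trivial]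
          have hRpos : ∀ (w : Fin r → ℂ), 0 ≤ star w ⬝ᵥ G.mulVec w :=
            (hApos (x 0)).posSemidef.dotProduct_mulVec_nonneg
          have key : (0 : ℂ) ≤ ∑ j, ∑ k, (H j k : ℂ) * R j k := by
            have hexp : ∑ j, ∑ k, (H j k : ℂ) * R j k
                = ∑ l, star (∑ j, (B l j : ℂ) • u j) ⬝ᵥ G.mulVec (∑ j, (B l j : ℂ) • u j) := by
              have hql : ∀ l, star (∑ j, (B l j : ℂ) • u j) ⬝ᵥ G.mulVec (∑ j, (B l j : ℂ) • u j)
                  = ∑ k, ∑ j, (B l k : ℂ) * ((B l j : ℂ) * R j k) := fun l =>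
                aux_quad G (fun j => B l j) u
              have e0 : ∑ j, ∑ k, (H j k : ℂ) * R j k
                  = ∑ j, ∑ k, ∑ l, (B l j : ℂ) * (B l k : ℂ) * R j k := by
                refine Finset.sum_congr rfl fun j _ => Finset.sum_congr rfl fun k _ => ?_
                rw [hHe, Finset.sum_mul]
              have e1 : ∑ j, ∑ k, ∑ l, (B l j : ℂ) * (B l k : ℂ) * R j k
                  = ∑ k, ∑ j, ∑ l, (B l j : ℂ) * (B l k : ℂ) * R j k := Finset.sum_comm
              have e2 : ∑ k, ∑ j, ∑ l, (B l j : ℂ) * (B l k : ℂ) * R j k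
                  = ∑ k, ∑ l, ∑ j, (B l j : ℂ) * (B l k : ℂ) * R j k :=
                Finset.sum_congr rfl fun k _ => Finset.sum_comm
              have e3 : ∑ k, ∑ l, ∑ j, (B l j : ℂ) * (B l k : ℂ) * R j k
                  = ∑ l, ∑ k, ∑ j, (B l j : ℂ) * (B l k : ℂ) * R j k := Finset.sum_comm
              rw [e0, e1, e2, e3]
              refine Finset.sum_congr rfl fun l _ => ?_
              rw [hql l]
              refine Finset.sum_congr rfl fun k _ => Finset.sum_congr rfl fun j _ => ?_
              ring
            rw [hexp]
            exact Finset.sum_nonneg fun l _ => hRpos _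
          have hsum : (∑ j, ∑ k, -((H j k : ℂ) * (ρ * R j k)))
              = -(ρ * ∑ j, ∑ k, (H j k : ℂ) * R j k) := by
            rw [Finset.mul_sum, ← Finset.sum_neg_distrib]
            refine Finset.sum_congr rfl fun j _ => ?_
            rw [Finset.mul_sum, ← Finset.sum_neg_distrib]
            refine Finset.sum_congr rfl fun k _ => ?_
            ring
          rw [hsum]
          exact neg_nonpos.2 (mul_nonneg hρ0 key)
        · -- curvature part
          have hccj : ∀ j : Fin (m + 1), cc j = if 0 = j then 1 else 0 := by
            intro j
            rw [hcc]
            simp only [Pi.single_apply]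
            split <;> norm_num
          have h1 : (∑ j, ∑ k, (cc j * cc k) * (ρ * Q j k)) = ρ * Q 0 0 := by
            simp [hccj, ite_mul, zero_mul, one_mul, mul_ite, mul_zero, Finset.sum_ite_eq]
          rw [h1]
          have hQ00 : Q 0 0 ≤ 0 := hΘA (x 0) (u 0)
          rw [← neg_nonneg, ← mul_neg]
          exact mul_nonneg hρ0 (neg_nonneg.2 hQ00)
end

section
/- Let G : ℂⁿ → ℝ be continuous, subharmonic, and strictly positive, and assume ∫_{ℝⁿ×K} G(x+iy) dV(x,y) < ∞ for every compact K ⊂ ℝⁿ. Then the function y ↦ ∫_{ℝⁿ} G(x+iy) dV(x) is continuous on ℝⁿ. -/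
open scoped ComplexOrder
open Matrix MeasureTheory

/-- The Euclidean ball of radius `ρ` in `ℝⁿ × ℝⁿ ≅ ℂⁿ`. -/
def eucBall2 {n : ℕ} (z : (Fin n → ℝ) × (Fin n → ℝ)) (ρ : ℝ) :
    Set ((Fin n → ℝ) × (Fin n → ℝ)) :=
  {w | ∑ i, ((w.1 i - z.1 i) ^ 2 + (w.2 i - z.2 i) ^ 2) < ρ ^ 2}

lemma aux_vol_shift {n : ℕ} (a : Fin n → ℝ) :
    volume {x : Fin n → ℝ | ∑ i, (a i - x i)^2 < 1} = volume {x : Fin n → ℝ | ∑ i, (x i)^2 < 1} := by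
  have h : {x : Fin n → ℝ | ∑ i, (a i - x i)^2 < 1}
      = (fun x => x + (-a)) ⁻¹' {x : Fin n → ℝ | ∑ i, (x i)^2 < 1} := by
    ext x
    simp only [Set.mem_setOf_eq, Set.mem_preimage, Pi.add_apply, Pi.neg_apply]
    constructor <;> intro h <;>
      · refine lt_of_eq_of_lt (Finset.sum_congr rfl fun i _ => by ring) h
  rw [h, measure_preimage_add_right]

lemma aux_vol_ball_shift {n : ℕ} (z : (Fin n → ℝ) × (Fin n → ℝ)) :
    volume (eucBall2 z 1) = volume (eucBall2 (0 : (Fin n → ℝ) × (Fin n → ℝ)) 1) := by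
  have h : eucBall2 z 1 = (fun w => -z + w) ⁻¹' eucBall2 (0 : (Fin n → ℝ) × (Fin n → ℝ)) 1 := by
    ext w
    simp only [eucBall2, Set.mem_setOf_eq, Set.mem_preimage, Prod.fst_add, Prod.snd_add,
      Prod.fst_neg, Prod.snd_neg, Pi.add_apply, Pi.neg_apply, Prod.fst_zero, Prod.snd_zero,
      Pi.zero_apply, sub_zero]
    constructor <;> intro h <;>
      · refine lt_of_eq_of_lt (Finset.sum_congr rfl fun i _ => by ring) h
  rw [h, Measure.volume_eq_prod _ _, measure_preimage_add]

lemma aux_vol_finite {n : ℕ} :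
    volume {x : Fin n → ℝ | ∑ i, (x i)^2 < 1} < ⊤ := by
  have hsub : {x : Fin n → ℝ | ∑ i, (x i)^2 < 1} ⊆ Set.univ.pi fun _ => Set.Ioo (-1 : ℝ) 1 := by
    intro x hx
    simp only [Set.mem_setOf_eq] at hx
    intro i _
    have h1 : (x i)^2 < 1 :=
      lt_of_le_of_lt (Finset.single_le_sum (fun j _ => sq_nonneg (x j)) (Finset.mem_univ i)) hx
    have := (sq_lt_one_iff_abs_lt_one _).mp h1
    exact Set.mem_Ioo.mpr (abs_lt.mp this)
  refine lt_of_le_of_lt (measure_mono hsub) ?_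
  rw [volume_pi_pi]
  exact ENNReal.prod_lt_top fun i _ => by simp [Real.volume_Ioo]

theorem statement17 {n : ℕ} (G : (Fin n → ℝ) × (Fin n → ℝ) → ℝ)
    (hcont : Continuous G) (hpos : ∀ z, 0 < G z)
    (hsub : ∀ (z : (Fin n → ℝ) × (Fin n → ℝ)) (ρ : ℝ), 0 < ρ →
      G z ≤ (volume (eucBall2 z ρ)).toReal⁻¹ * ∫ w in eucBall2 z ρ, G w)
    (hint : ∀ K : Set (Fin n → ℝ), IsCompact K →
      IntegrableOn G (Set.univ ×ˢ K) volume) :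
    Continuous fun y : Fin n → ℝ => ∫ x : Fin n → ℝ, G (x, y) := by
  rw [continuous_iff_continuousAt]
  intro y₀
  -- the compact slab in the second variable
  set K : Set (Fin n → ℝ) := Set.univ.pi fun i => Set.Icc (y₀ i - 2) (y₀ i + 2) with hKdef
  have hK : IsCompact K := isCompact_univ_pi fun i => isCompact_Icc
  set T : Set ((Fin n → ℝ) × (Fin n → ℝ)) := Set.univ ×ˢ K with hTdef
  have hT : IntegrableOn G T volume := hint K hK
  set c : ℝ := (volume (eucBall2 (0 : (Fin n → ℝ) × (Fin n → ℝ)) 1)).toReal⁻¹ with hc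
  have hc0 : 0 ≤ c := inv_nonneg.2 ENNReal.toReal_nonneg
  set A : (Fin n → ℝ) → Set ((Fin n → ℝ) × (Fin n → ℝ)) :=
    fun x => {w | ∑ i, (w.1 i - x i)^2 < 1} with hA
  have hAopen : ∀ x, IsOpen (A x) := by
    intro x
    exact isOpen_lt (by fun_prop) continuous_const
  -- the dominating function
  apply continuousAt_of_dominated (bound := fun x => c * ∫ w in T, (A x).indicator G w)
  · exact Filter.Eventually.of_forall fun y =>
      (hcont.comp (continuous_id.prodMk continuous_const)).aestronglyMeasurable
  · -- the bound holds for y near y₀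
    have hU : {y : Fin n → ℝ | ∑ i, (y i - y₀ i)^2 < 1} ∈ nhds y₀ := by
      refine (isOpen_lt (by fun_prop) continuous_const).mem_nhds ?_
      simp
    filter_upwards [hU] with y hy
    refine Filter.Eventually.of_forall fun x => ?_
    have h1 := hsub (x, y) 1 one_pos
    rw [aux_vol_ball_shift] at h1
    have hsubset : eucBall2 (x, y) 1 ⊆ T ∩ A x := by
      intro w hw
      simp only [eucBall2, Set.mem_setOf_eq, one_pow] at hw
      have hterm : ∀ i, ((w.1 i - x i) ^ 2 + (w.2 i - y i) ^ 2) ≤ 1 := by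
        intro i
        refine le_of_lt (lt_of_le_of_lt (Finset.single_le_sum
          (f := fun j => ((w.1 j - x j) ^ 2 + (w.2 j - y j) ^ 2))
          (fun j _ => add_nonneg (sq_nonneg _) (sq_nonneg _)) (Finset.mem_univ i)) hw)
      constructor
      · refine ⟨Set.mem_univ _, ?_⟩
        intro i _
        have h2 : (w.2 i - y i)^2 ≤ 1 :=
          le_trans (le_add_of_nonneg_left (sq_nonneg _)) (hterm i)
        have h3 : (y i - y₀ i)^2 ≤ 1 := by
          refine le_of_lt (lt_of_le_of_lt (Finset.single_le_sum
            (f := fun j => (y j - y₀ j) ^ 2)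
            (fun j _ => sq_nonneg _) (Finset.mem_univ i)) hy)
        have h2' : |w.2 i - y i| ≤ 1 := (sq_le_one_iff_abs_le_one _).mp h2
        have h3' : |y i - y₀ i| ≤ 1 := (sq_le_one_iff_abs_le_one _).mp h3
        have h4 : |w.2 i - y₀ i| ≤ 2 := by
          calc |w.2 i - y₀ i| = |(w.2 i - y i) + (y i - y₀ i)| := by ring_nf
            _ ≤ |w.2 i - y i| + |y i - y₀ i| := abs_add_le _ _
            _ ≤ 2 := by linarith
        have := abs_le.mp h4
        exact Set.mem_Icc.mpr ⟨by linarith [this.1], by linarith [this.2]⟩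
      · simp only [hA, Set.mem_setOf_eq]
        exact lt_of_le_of_lt (Finset.sum_le_sum fun i _ =>
          le_add_of_nonneg_right (sq_nonneg _)) hw
    have h2 : ∫ w in eucBall2 (x, y) 1, G w ≤ ∫ w in T ∩ A x, G w :=
      setIntegral_mono_set (hT.mono_set Set.inter_subset_left)
        (Filter.Eventually.of_forall fun w => (hpos w).le)
        (HasSubset.Subset.eventuallyLE hsubset)
    have h3 : ∫ w in T, (A x).indicator G w = ∫ w in T ∩ A x, G w :=
      setIntegral_indicator (hAopen x).measurableSet
    calc ‖G (x, y)‖ = G (x, y) := Real.norm_of_nonneg (hpos _).le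
      _ ≤ c * ∫ w in eucBall2 (x, y) 1, G w := h1
      _ ≤ c * ∫ w in T ∩ A x, G w := mul_le_mul_of_nonneg_left h2 hc0
      _ = c * ∫ w in T, (A x).indicator G w := by rw [h3]
  · -- integrability of the bound
    set F₂ : ((Fin n → ℝ) × ((Fin n → ℝ) × (Fin n → ℝ))) → ℝ :=
      fun p => Set.indicator {q : (Fin n → ℝ) × ((Fin n → ℝ) × (Fin n → ℝ)) |
        ∑ i, (q.2.1 i - q.1 i)^2 < 1} (fun q => G q.2) p with hF₂
    have hSopen : IsOpen {q : (Fin n → ℝ) × ((Fin n → ℝ) × (Fin n → ℝ)) |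
        ∑ i, (q.2.1 i - q.1 i)^2 < 1} := isOpen_lt (by fun_prop) continuous_const
    have hF₂meas : StronglyMeasurable F₂ :=
      (hcont.comp continuous_snd).stronglyMeasurable.indicator hSopen.measurableSet
    have hF₂int : Integrable F₂ ((volume : Measure (Fin n → ℝ)).prod (volume.restrict T)) := by
      refine ⟨hF₂meas.aestronglyMeasurable, ?_⟩
      have hmeas : Measurable fun p => (‖F₂ p‖₊ : ENNReal) :=
        hF₂meas.measurable.nnnorm.coe_nnreal_ennreal
      rw [HasFiniteIntegral]; simp_rw [enorm_eq_nnnorm]; rw [lintegral_prod_symm _ hmeas.aemeasurable]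
      have hinner : ∀ w : (Fin n → ℝ) × (Fin n → ℝ),
          ∫⁻ x, (‖F₂ (x, w)‖₊ : ENNReal) ∂volume
            = (‖G w‖₊ : ENNReal) * volume {x : Fin n → ℝ | ∑ i, (x i)^2 < 1} := by
        intro w
        have heq : ∀ x, (‖F₂ (x, w)‖₊ : ENNReal)
            = Set.indicator {x : Fin n → ℝ | ∑ i, (w.1 i - x i)^2 < 1}
                (fun _ => (‖G w‖₊ : ENNReal)) x := by
          intro x
          by_cases h : ∑ i, (w.1 i - x i)^2 < 1 <;>
            simp [hF₂, Set.indicator_apply, h]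
        simp_rw [heq]
        rw [lintegral_indicator (isOpen_lt (by fun_prop) continuous_const).measurableSet,
          setLIntegral_const, aux_vol_shift]
      rw [lintegral_congr hinner, lintegral_mul_const _ (hcont.measurable.nnnorm.coe_nnreal_ennreal)]
      exact ENNReal.mul_lt_top (by simpa only [HasFiniteIntegral, enorm_eq_nnnorm] using hT.2) aux_vol_finite
    have := (hF₂int.integral_prod_left).const_mul c
    refine this.congr ?_
    refine Filter.Eventually.of_forall fun x => ?_
    congr 1
  · refine Filter.Eventually.of_forall fun x => ?_
    exact (hcont.comp (continuous_const.prodMk continuous_id)).continuousAt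
end
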